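/- Let m be an odd squarefree positive integer, p a prime not dividing m with p = qm + r (0 < r < m), and write Φ_m = Σ_s a_s x^s and G = Ψ_m Σ_{u≥0} x^{um} = Σ_t e_t x^t with blocks g_{i,j}(x) = Σ_{k=0}^{l} e_{ip+mj+k} x^k (l = m-1 if j < q, l = r-1 if j = q). Then the blocks of Φ_{mp} satisfy f_{m,p,i,j} = -Σ_{s=0}^{i} a_s g_{i-s, j} for all 0 ≤ i ≤ φ(m)-1 and 0 ≤ j ≤ q. -/

import Mathlib

open Polynomial

/-- The `m`-th inverse cyclotomic polynomial `Ψ_m = (X^m - 1)/Φ_m`. -/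
noncomputable def invCyclotomic (m : ℕ) : ℤ[X] := (X ^ m - 1) /ₘ cyclotomic m ℤ

/-- The formal power series `G = Ψ_m · Σ_{u≥0} x^{um}`, with coefficients `e_t`. -/
noncomputable def Gseries (m : ℕ) : PowerSeries ℤ :=
  ((invCyclotomic m : ℤ[X]) : PowerSeries ℤ) *
    PowerSeries.mk fun t => if m ∣ t then (1 : ℤ) else 0

lemma cyclo_mul_inv (m : ℕ) : cyclotomic m ℤ * invCyclotomic m = X ^ m - 1 := by
  have h := Polynomial.modByMonic_add_div (X ^ m - 1 : ℤ[X]) (cyclotomic m ℤ)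
  rwa [(Polynomial.modByMonic_eq_zero_iff_dvd (cyclotomic.monic m ℤ)).2
    (cyclotomic.dvd_X_pow_sub_one m ℤ), zero_add] at h

lemma cyclo_mul_G (m : ℕ) (hm : 0 < m) :
    (cyclotomic m ℤ : PowerSeries ℤ) * Gseries m = -1 := by
  rw [Gseries, ← mul_assoc, ← Polynomial.coe_mul, cyclo_mul_inv]
  ext n
  rw [Polynomial.coe_sub, Polynomial.coe_pow, Polynomial.coe_X, Polynomial.coe_one,
    sub_mul, one_mul, map_sub, mul_comm ((PowerSeries.X : PowerSeries ℤ) ^ m),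
    PowerSeries.coeff_mul_X_pow', PowerSeries.coeff_mk]
  simp only [map_neg, PowerSeries.coeff_one]
  by_cases h : m ≤ n
  · rw [if_pos h, PowerSeries.coeff_mk]
    have hn0 : n ≠ 0 := by omega
    rw [if_neg hn0]
    have : m ∣ n - m ↔ m ∣ n := by
      constructor
      · intro hh; have := Nat.dvd_add hh (dvd_refl m); rwa [Nat.sub_add_cancel h] at this
      · intro hd; exact Nat.dvd_sub hd dvd_rfl
    by_cases hd : m ∣ n
    · rw [if_pos (this.2 hd), if_pos hd]; ring
    · rw [if_neg (fun hh => hd (this.1 hh)), if_neg hd]; ring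
  · rw [if_neg h, PowerSeries.coeff_mk]
    by_cases hn0 : n = 0
    · subst hn0; rw [if_pos (dvd_zero m), if_pos rfl]; ring
    · rw [if_neg hn0, if_neg (fun hd => h (Nat.le_of_dvd (Nat.pos_of_ne_zero hn0) hd))]; ring

lemma sum_filter_dvd (p n : ℕ) (hp : 0 < p) (F : ℕ → ℤ) :
    ∑ a ∈ Finset.range (n + 1), (if p ∣ a then F a else 0)
      = ∑ s ∈ Finset.range (n / p + 1), F (s * p) := by
  have hinj : ∀ x ∈ Finset.range (n / p + 1), ∀ y ∈ Finset.range (n / p + 1),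
      x * p = y * p → x = y := fun x _ y _ h => Nat.eq_of_mul_eq_mul_right hp h
  rw [show (∑ s ∈ Finset.range (n / p + 1), F (s * p))
      = ∑ s ∈ Finset.range (n / p + 1),
          (fun a => if p ∣ a then F a else 0) ((fun s => s * p) s) by
      exact Finset.sum_congr rfl fun s _ => by
        simp only [if_pos (dvd_mul_left p s)]]
  rw [← Finset.sum_image (g := fun s => s * p)
    (f := fun a => if p ∣ a then F a else 0) hinj]
  apply (Finset.sum_subset ?_ ?_).symm
  · intro a ha
    rw [Finset.mem_image] at ha
    obtain ⟨s, hs, rfl⟩ := ha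
    rw [Finset.mem_range] at hs ⊢
    have : s * p ≤ (n / p) * p := Nat.mul_le_mul_right p (by omega)
    have := Nat.div_mul_le_self n p
    omega
  · intro a ha hna
    rw [if_neg]
    intro ⟨c, hc⟩
    apply hna
    rw [Finset.mem_image]
    refine ⟨c, ?_, by rw [mul_comm]; omega⟩
    rw [Finset.mem_range] at ha ⊢
    subst hc
    have hcm : c * p = p * c := mul_comm c p
    have h2 : c ≤ n / p := Nat.le_div_iff_mul_le hp |>.2 (by omega)
    omega

lemma coeff_cyclotomic_mul_prime (m p : ℕ) (hm : 0 < m) (hp : p.Prime) (hpm : ¬ p ∣ m)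
    (n : ℕ) :
    (cyclotomic (m * p) ℤ).coeff n =
      -∑ s ∈ Finset.range (n / p + 1),
        (cyclotomic m ℤ).coeff s * PowerSeries.coeff (n - s * p) (Gseries m) := by
  have hexp : expand ℤ p (cyclotomic m ℤ) = cyclotomic (m * p) ℤ * cyclotomic m ℤ :=
    cyclotomic_expand_eq_cyclotomic_mul hp hpm ℤ
  have hPS : (cyclotomic (m * p) ℤ : PowerSeries ℤ)
      = -(((expand ℤ p (cyclotomic m ℤ) : ℤ[X])) : PowerSeries ℤ) * Gseries m := by
    rw [hexp, Polynomial.coe_mul, neg_mul, mul_assoc, cyclo_mul_G m hm, mul_neg_one, neg_neg]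
  have := congrArg (PowerSeries.coeff n) hPS
  rw [Polynomial.coeff_coe] at this
  rw [this, neg_mul, map_neg, PowerSeries.coeff_mul,
    Finset.Nat.sum_antidiagonal_eq_sum_range_succ
      (f := fun a b => PowerSeries.coeff a ((expand ℤ p (cyclotomic m ℤ) : ℤ[X]) : PowerSeries ℤ)
        * PowerSeries.coeff b (Gseries m))]
  congr 1
  have h1 : (∑ k ∈ Finset.range n.succ,
      PowerSeries.coeff k ((expand ℤ p (cyclotomic m ℤ) : ℤ[X]) : PowerSeries ℤ)
        * PowerSeries.coeff (n - k) (Gseries m))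
      = ∑ a ∈ Finset.range (n + 1),
          (if p ∣ a then
            (cyclotomic m ℤ).coeff (a / p) * PowerSeries.coeff (n - a) (Gseries m) else 0) :=
    Finset.sum_congr rfl fun a _ => by
      rw [Polynomial.coeff_coe, Polynomial.coeff_expand hp.pos]
      split_ifs <;> simp
  rw [h1, sum_filter_dvd p n hp.pos _]
  apply Finset.sum_congr rfl
  intro s _
  rw [Nat.mul_div_cancel _ hp.pos]

/-- The block `g_{i,j}(x) = Σ_{k=0}^{l} e_{ip+mj+k} x^k`, with `l = m-1` for `j < q` and
`l = r-1` for `j = q` (here `q = p / m`, `r = p % m`). -/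
noncomputable def gBlock (m p i j : ℕ) : ℤ[X] :=
  ∑ k ∈ Finset.range (if j < p / m then m else p % m),
    C (PowerSeries.coeff (i * p + m * j + k) (Gseries m)) * X ^ k

/-- The block `f_{m,p,i,j}` of `Φ_{mp}`. -/
noncomputable def cycBlock (m p i j : ℕ) : ℤ[X] :=
  ∑ k ∈ Finset.range m,
    if j * m + k < p then C ((cyclotomic (m * p) ℤ).coeff (i * p + j * m + k)) * X ^ k else 0

lemma coeff_sum_C_X (L : ℕ) (f : ℕ → ℤ) (k' : ℕ) :
    (∑ k ∈ Finset.range L, C (f k) * X ^ k).coeff k' = if k' < L then f k' else 0 := by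
  rw [Polynomial.finset_sum_coeff]
  simp only [Polynomial.coeff_C_mul, Polynomial.coeff_X_pow, mul_ite, mul_one, mul_zero]
  rw [Finset.sum_ite_eq (Finset.range L) k' f]
  simp only [Finset.mem_range]

lemma coeff_gBlock (m p i j k' : ℕ) :
    (gBlock m p i j).coeff k' =
      if k' < (if j < p / m then m else p % m)
        then PowerSeries.coeff (i * p + m * j + k') (Gseries m) else 0 :=
  coeff_sum_C_X _ _ _

lemma coeff_cycBlock (m p i j k' : ℕ) :
    (cycBlock m p i j).coeff k' =
      if k' < m ∧ j * m + k' < p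
        then (cyclotomic (m * p) ℤ).coeff (i * p + j * m + k') else 0 := by
  rw [cycBlock, Polynomial.finset_sum_coeff]
  have h : ∀ k ∈ Finset.range m,
      ((if j * m + k < p then C ((cyclotomic (m * p) ℤ).coeff (i * p + j * m + k)) * X ^ k
          else 0).coeff k')
        = (if k' = k then
            (if j * m + k' < p then (cyclotomic (m * p) ℤ).coeff (i * p + j * m + k') else 0)
          else 0) := by
    intro k _
    rcases eq_or_ne k' k with rfl | hk
    · by_cases h1 : j * m + k' < p <;>
        simp [h1, Polynomial.coeff_C_mul, Polynomial.coeff_X_pow]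
    · by_cases h1 : j * m + k < p <;>
        simp [h1, hk, Polynomial.coeff_C_mul, Polynomial.coeff_X_pow]
  rw [Finset.sum_congr rfl h, Finset.sum_ite_eq (Finset.range m) k']
  simp only [Finset.mem_range]
  split_ifs <;> first | rfl | tauto

/-- `f_{m,p,i,j} = -Σ_{s=0}^{i} a_s g_{i-s,j}`, where `Φ_m = Σ_s a_s x^s`. -/
theorem cycBlock_eq_neg_sum_gBlock (m p : ℕ) (hm : 0 < m) (hodd : Odd m)
    (hsf : Squarefree m) (hp : p.Prime) (hpm : ¬ p ∣ m) :
    ∀ i < Nat.totient m, ∀ j ≤ p / m,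
      cycBlock m p i j =
        -∑ s ∈ Finset.range (i + 1),
            C ((cyclotomic m ℤ).coeff s) * gBlock m p (i - s) j := by
  intro i hi j hj
  ext k'
  rw [coeff_cycBlock, Polynomial.coeff_neg, Polynomial.finset_sum_coeff]
  simp only [Polynomial.coeff_C_mul, coeff_gBlock]
  obtain ⟨q, r, hq, hr, hqr, hrm⟩ :
      ∃ q r, p / m = q ∧ p % m = r ∧ m * q + r = p ∧ r < m :=
    ⟨_, _, rfl, rfl, Nat.div_add_mod p m, Nat.mod_lt _ hm⟩
  rw [hq] at hj ⊢
  rw [hr]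
  have hmq : q * m = m * q := mul_comm q m
  by_cases hmain : k' < m ∧ j * m + k' < p
  · obtain ⟨hk'm, hjk⟩ := hmain
    rw [if_pos ⟨hk'm, hjk⟩]
    have hkL : k' < (if j < q then m else r) := by
      split_ifs with h1
      · exact hk'm
      · have hjq : j = q := by omega
        have e3 : j * m = m * q := by rw [hjq]; exact mul_comm q m
        omega
    have hn : (i * p + j * m + k') / p = i := by
      rw [show i * p + j * m + k' = j * m + k' + p * i by ring,
        Nat.add_mul_div_left _ _ hp.pos, Nat.div_eq_of_lt hjk, zero_add]
    rw [coeff_cyclotomic_mul_prime m p hm hp hpm, hn]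
    congr 1
    apply Finset.sum_congr rfl
    intro s hs
    rw [Finset.mem_range] at hs
    rw [if_pos hkL]
    have e4 : (i - s) * p + s * p = i * p := by
      rw [← add_mul, Nat.sub_add_cancel (by omega)]
    have e5 : j * m = m * j := mul_comm j m
    have : i * p + j * m + k' - s * p = (i - s) * p + m * j + k' := by omega
    rw [this]
  · rw [if_neg hmain]
    have hz : ∀ s ∈ Finset.range (i + 1),
        (cyclotomic m ℤ).coeff s *
          (if k' < (if j < q then m else r)
            then PowerSeries.coeff ((i - s) * p + m * j + k') (Gseries m) else 0) = 0 := by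
      intro s _
      rw [if_neg, mul_zero]
      intro hkL
      apply hmain
      split_ifs at hkL with h1
      · refine ⟨hkL, ?_⟩
        have h2 : (j + 1) * m ≤ q * m := Nat.mul_le_mul_right m (by omega)
        have e1 : (j + 1) * m = j * m + m := by ring
        omega
      · have hjq : j = q := by omega
        have e3 : j * m = m * q := by rw [hjq]; exact mul_comm q m
        omega
    rw [Finset.sum_congr rfl hz, Finset.sum_const_zero, neg_zero]
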